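/- arXiv:0801.0081 — 2 statements merged into one kernel-verified Lean document; each statement's English description precedes it below -/
import Mathlib

section
/- Under the change of variables r ↦ g r gᵀ with g ∈ GL(m,ℝ), the Lebesgue measure on the space of m×m real symmetric matrices transforms by the factor |det g|^{m+1}; equivalently, for integrable f on S_m, ∫_{S_m} f(g s gᵀ) ds = |det g|^{-(m+1)} ∫_{S_m} f(s) ds. -/
open Matrix MeasureTheory

/-- Index set of the entries `s_{ij}`, `i ≤ j`, of an `m × m` symmetric matrix;
the space `S_m ≅ ℝ^{m(m+1)/2}` with measure `ds = ∏_{i ≤ j} ds_{ij}` is realized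
as `SymIdx m → ℝ` with Lebesgue (product) measure. -/
def SymIdx (m : ℕ) := {p : Fin m × Fin m // p.1 ≤ p.2}

instance (m : ℕ) : Fintype (SymIdx m) := by unfold SymIdx; infer_instance

/-- The symmetric matrix with entries given by coordinates `x = (x_{ij})_{i ≤ j}`. -/
def symMat {m : ℕ} (x : SymIdx m → ℝ) : Matrix (Fin m) (Fin m) ℝ :=
  fun i j => if h : i ≤ j then x ⟨(i, j), h⟩ else x ⟨(j, i), (le_total i j).resolve_left h⟩

namespace SymAux

instance (m : ℕ) : DecidableEq (SymIdx m) := by unfold SymIdx; infer_instance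

variable {m : ℕ}

lemma symMat_symm (x : SymIdx m → ℝ) (i j : Fin m) : symMat x i j = symMat x j i := by
  unfold symMat
  rcases le_or_gt i j with h | h
  · rcases eq_or_lt_of_le h with rfl | h'
    · simp
    · rw [dif_pos h, dif_neg (not_le.2 h')]
  · rw [dif_neg (not_le.2 h), dif_pos h.le]

lemma symMat_coords {s : Matrix (Fin m) (Fin m) ℝ} (hs : sᵀ = s) :
    symMat (fun p => s p.1.1 p.1.2) = s := by
  funext i j
  unfold symMat
  split
  · rfl
  · conv_rhs => rw [← hs]
    rfl

lemma symMat_add (x y : SymIdx m → ℝ) : symMat (x + y) = symMat x + symMat y := by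
  funext i j
  simp only [symMat, Matrix.add_apply, Pi.add_apply]
  split <;> rfl

lemma symMat_smul (c : ℝ) (x : SymIdx m → ℝ) : symMat (c • x) = c • symMat x := by
  funext i j
  simp only [symMat, Matrix.smul_apply, Pi.smul_apply]
  split <;> rfl

/-- The linear map on coordinates corresponding to `s ↦ g s gᵀ`. -/
noncomputable def Tg (g : Matrix (Fin m) (Fin m) ℝ) : (SymIdx m → ℝ) →ₗ[ℝ] (SymIdx m → ℝ) where
  toFun x := fun p => (g * symMat x * gᵀ) p.1.1 p.1.2
  map_add' x y := by funext p; simp [symMat_add, Matrix.mul_add, Matrix.add_mul]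
  map_smul' c x := by funext p; simp [symMat_smul, Matrix.mul_smul, Matrix.smul_mul]

lemma conj_transpose_symm (g : Matrix (Fin m) (Fin m) ℝ) (x : SymIdx m → ℝ) :
    (g * symMat x * gᵀ)ᵀ = g * symMat x * gᵀ := by
  have hx : (symMat x)ᵀ = symMat x := by funext i j; exact symMat_symm x j i
  rw [Matrix.transpose_mul, Matrix.transpose_mul, Matrix.transpose_transpose, hx, Matrix.mul_assoc]

lemma symMat_Tg (g : Matrix (Fin m) (Fin m) ℝ) (x : SymIdx m → ℝ) :
    symMat (Tg g x) = g * symMat x * gᵀ :=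
  symMat_coords (conj_transpose_symm g x)

lemma Tg_mul (g h : Matrix (Fin m) (Fin m) ℝ) : Tg (g * h) = (Tg g).comp (Tg h) := by
  refine LinearMap.ext fun x => funext fun p => ?_
  simp only [LinearMap.comp_apply]
  show (g * h * symMat x * (g * h)ᵀ) p.1.1 p.1.2 = (g * symMat (Tg h x) * gᵀ) p.1.1 p.1.2
  rw [symMat_Tg, Matrix.transpose_mul]
  simp only [Matrix.mul_assoc]

lemma symMat_apply (x : SymIdx m → ℝ) (p : SymIdx m) : symMat x p.1.1 p.1.2 = x p := by
  unfold symMat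
  rw [dif_pos p.2]
  exact congrArg x (Subtype.ext rfl)

lemma Tg_diagonal_apply (D : Fin m → ℝ) (x : SymIdx m → ℝ) (p : SymIdx m) :
    Tg (Matrix.diagonal D) x p = D p.1.1 * D p.1.2 * x p := by
  show (Matrix.diagonal D * symMat x * (Matrix.diagonal D)ᵀ) p.1.1 p.1.2 = _
  rw [Matrix.diagonal_transpose, Matrix.mul_diagonal, Matrix.diagonal_mul, symMat_apply]
  ring

lemma prod_sym (D : Fin m → ℝ) :
    ∏ p : SymIdx m, (D p.1.1 * D p.1.2) = (∏ i, D i) ^ (m + 1) := by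
  have h1 : ∏ p : SymIdx m, (D p.1.1 * D p.1.2)
      = ∏ q ∈ Finset.univ.filter (fun q : Fin m × Fin m => q.1 ≤ q.2), (D q.1 * D q.2) := by
    show ∏ p : {q : Fin m × Fin m // q.1 ≤ q.2}, (D p.1.1 * D p.1.2) = _
    exact (Finset.prod_subtype (p := fun q : Fin m × Fin m => q.1 ≤ q.2) _
      (fun q => by simp) (fun q => D q.1 * D q.2)).symm
  rw [h1, Finset.prod_filter, Fintype.prod_prod_type]
  have h2 : ∀ i j : Fin m, (if i ≤ j then D i * D j else 1)
      = (if i ≤ j then D i else 1) * (if i ≤ j then D j else 1) := by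
    intro i j; split <;> ring
  simp only [h2]
  simp only [Finset.prod_mul_distrib]
  have hA : ∀ i : Fin m, (∏ j : Fin m, if i ≤ j then D i else 1) = D i ^ (m - (i : ℕ)) := by
    intro i
    rw [Finset.prod_ite, Finset.prod_const, Finset.prod_const_one, mul_one]
    congr 1
    have : Finset.univ.filter (fun j : Fin m => i ≤ j) = Finset.Ici i := by ext j; simp
    rw [this, Fin.card_Ici]
  have hB : (∏ i : Fin m, ∏ j : Fin m, if i ≤ j then D j else 1)
      = ∏ j : Fin m, D j ^ ((j : ℕ) + 1) := by
    rw [Finset.prod_comm]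
    refine Finset.prod_congr rfl fun j _ => ?_
    rw [Finset.prod_ite, Finset.prod_const, Finset.prod_const_one, mul_one]
    congr 1
    have : Finset.univ.filter (fun i : Fin m => i ≤ j) = Finset.Iic j := by ext i; simp
    rw [this, Fin.card_Iic]
  rw [Finset.prod_congr rfl fun i _ => hA i, hB, ← Finset.prod_mul_distrib, ← Finset.prod_pow]
  refine Finset.prod_congr rfl fun i _ => ?_
  rw [← pow_add]
  congr 1
  have : (i : ℕ) < m := i.isLt
  omega

lemma det_Tg_diagonal (D : Fin m → ℝ) :
    LinearMap.det (Tg (Matrix.diagonal D)) = (Matrix.diagonal D).det ^ (m + 1) := by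
  have hM : LinearMap.toMatrix (Pi.basisFun ℝ (SymIdx m)) (Pi.basisFun ℝ (SymIdx m))
      (Tg (Matrix.diagonal D)) = Matrix.diagonal (fun p : SymIdx m => D p.1.1 * D p.1.2) := by
    ext p q
    rw [LinearMap.toMatrix_apply', Pi.basisFun_repr, Pi.basisFun_apply, Tg_diagonal_apply,
      Matrix.diagonal_apply]
    by_cases h : p = q
    · subst h; simp [Pi.single_apply]
    · simp [Pi.single_apply, Ne.symm h, h]
  rw [← LinearMap.det_toMatrix (Pi.basisFun ℝ (SymIdx m)), hM, Matrix.det_diagonal, prod_sym,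
    Matrix.det_diagonal]

lemma symMat_single (q : SymIdx m) (u v : Fin m) :
    symMat (Pi.single q (1:ℝ)) u v
      = if (u = q.1.1 ∧ v = q.1.2) ∨ (u = q.1.2 ∧ v = q.1.1) then 1 else 0 := by
  unfold symMat
  rcases le_or_gt u v with h | h
  · erw [dif_pos h, Pi.single_apply]
    classical
    convert if_congr ?_ rfl rfl
    constructor
    · intro he
      subst he
      exact Or.inl ⟨rfl, rfl⟩
    · rintro (⟨h1, h2⟩ | ⟨h1, h2⟩)
      · exact Subtype.ext (Prod.ext_iff.2 ⟨h1, h2⟩)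
      · have h3 : q.1.1 = q.1.2 := le_antisymm q.2 (by rw [← h1, ← h2]; exact h)
        exact Subtype.ext (Prod.ext_iff.2 ⟨h1.trans h3.symm, h2.trans h3⟩)
  · erw [dif_neg (not_le.2 h), Pi.single_apply]
    classical
    convert if_congr ?_ rfl rfl
    constructor
    · intro he
      subst he
      exact Or.inr ⟨rfl, rfl⟩
    · rintro (⟨h1, h2⟩ | ⟨h1, h2⟩)
      · exact absurd (le_of_eq_of_le h1 (le_of_le_of_eq q.2 h2.symm)) (not_le.2 h)
      · exact Subtype.ext (Prod.ext_iff.2 ⟨h2, h1⟩)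

/-- Number of occurrences of `a` among the two indices of `p`. -/
def wt (a : Fin m) (p : SymIdx m) : ℕ :=
  (if p.1.1 = a then 1 else 0) + (if p.1.2 = a then 1 else 0)

lemma det_Tg_transvection (t : Matrix.TransvectionStruct (Fin m) ℝ) :
    LinearMap.det (Tg t.toMatrix) = 1 := by
  obtain ⟨a, b, hab, c⟩ := t
  rw [Matrix.TransvectionStruct.toMatrix_mk]
  have hEt : (Matrix.single a b c)ᵀ = Matrix.single b a c := by
    ext i j
    simp only [Matrix.transpose_apply, Matrix.single, Matrix.of_apply]
    exact if_congr and_comm rfl rfl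
  have hexp : ∀ (S : Matrix (Fin m) (Fin m) ℝ) (u v : Fin m),
      (Matrix.transvection a b c * S * (Matrix.transvection a b c)ᵀ) u v
      = S u v + (if u = a then c * S b v else 0) + (if v = a then S u b * c else 0)
        + (if v = a then (if u = a then c * S b b else 0) * c else 0) := by
    intro S u v
    unfold Matrix.transvection
    rw [Matrix.transpose_add, Matrix.transpose_one, hEt, Matrix.add_mul, Matrix.one_mul,
      Matrix.mul_add, Matrix.mul_one]
    by_cases hu : u = a <;> by_cases hv : v = a <;>
      simp [hu, hv, Matrix.add_apply] <;> ring
  set M := LinearMap.toMatrix (Pi.basisFun ℝ (SymIdx m)) (Pi.basisFun ℝ (SymIdx m))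
    (Tg (Matrix.transvection a b c)) with hMdef
  have hM : ∀ p q : SymIdx m,
      M p q = (Matrix.transvection a b c * symMat (Pi.single q 1)
        * (Matrix.transvection a b c)ᵀ) p.1.1 p.1.2 := by
    intro p q
    rw [hMdef, LinearMap.toMatrix_apply', Pi.basisFun_repr, Pi.basisFun_apply]
    rfl
  -- diagonal entries are 1
  have hdiag : ∀ p : SymIdx m, M p p = 1 := by
    intro p
    rw [hM, hexp]
    have e1 : symMat (Pi.single p (1:ℝ)) p.1.1 p.1.2 = 1 := by
      rw [symMat_apply, Pi.single_eq_same]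
    have e2 : (if p.1.1 = a then c * symMat (Pi.single p (1:ℝ)) b p.1.2 else 0) = 0 := by
      split_ifs with h
      · rw [symMat_single, if_neg, mul_zero]
        rintro (⟨h1, -⟩ | ⟨h1, h2⟩)
        · exact hab ((h1.trans h).symm)
        · exact hab ((h1.trans (h2.trans h)).symm)
      · rfl
    have e3 : (if p.1.2 = a then symMat (Pi.single p (1:ℝ)) p.1.1 b * c else 0) = 0 := by
      split_ifs with h
      · rw [symMat_single, if_neg, zero_mul]
        rintro (⟨-, h2⟩ | ⟨h1, h2⟩)
        · exact hab ((h2.trans h).symm)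
        · exact hab ((h2.trans (h1.trans h)).symm)
      · rfl
    have e4 : (if p.1.2 = a then
        (if p.1.1 = a then c * symMat (Pi.single p (1:ℝ)) b b else 0) * c else 0) = 0 := by
      split_ifs with h h'
      · rw [symMat_single, if_neg, mul_zero, zero_mul]
        rintro (⟨h1, -⟩ | ⟨h1, -⟩)
        · exact hab ((h1.trans h').symm)
        · exact hab ((h1.trans h).symm)
      · exact zero_mul c
      · rfl
    rw [e1, e2, e3, e4]
    ring
  -- off-diagonal entries vanish unless the weight strictly increases
  have hvan : ∀ p q : SymIdx m, p ≠ q → ¬ (wt a q < wt a p) → M p q = 0 := by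
    intro p q hpq hw
    rw [hM, hexp]
    have e1 : symMat (Pi.single q (1:ℝ)) p.1.1 p.1.2 = 0 := by
      rw [symMat_apply, Pi.single_eq_of_ne hpq]
    have e2 : (if p.1.1 = a then c * symMat (Pi.single q (1:ℝ)) b p.1.2 else 0) = 0 := by
      split_ifs with h
      · rw [symMat_single, if_neg, mul_zero]
        rintro (⟨h1, h2⟩ | ⟨h1, h2⟩)
        · refine hw ?_
          unfold wt
          rw [if_pos h, ← h1, ← h2, if_neg (fun hba : b = a => hab hba.symm)]
          omega
        · refine hw ?_
          unfold wt
          rw [if_pos h, ← h1, ← h2, if_neg (fun hba : b = a => hab hba.symm)]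
          omega
      · rfl
    have e3 : (if p.1.2 = a then symMat (Pi.single q (1:ℝ)) p.1.1 b * c else 0) = 0 := by
      split_ifs with h
      · rw [symMat_single, if_neg, zero_mul]
        rintro (⟨h1, h2⟩ | ⟨h1, h2⟩)
        · refine hw ?_
          unfold wt
          rw [if_pos h, ← h1, ← h2, if_neg (fun hba : b = a => hab hba.symm)]
          omega
        · refine hw ?_
          unfold wt
          rw [if_pos h, ← h1, ← h2, if_neg (fun hba : b = a => hab hba.symm)]
          omega
      · rfl
    have e4 : (if p.1.2 = a then
        (if p.1.1 = a then c * symMat (Pi.single q (1:ℝ)) b b else 0) * c else 0) = 0 := by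
      split_ifs with h h'
      · rw [symMat_single, if_neg, mul_zero, zero_mul]
        rintro (⟨h1, h2⟩ | ⟨h1, h2⟩)
        · refine hw ?_
          unfold wt
          rw [if_pos h, if_pos h', ← h1, ← h2,
            if_neg (fun hba : b = a => hab hba.symm)]
          omega
        · refine hw ?_
          unfold wt
          rw [if_pos h, if_pos h', ← h1, ← h2,
            if_neg (fun hba : b = a => hab hba.symm)]
          omega
      · exact zero_mul c
      · rfl
    rw [e1, e2, e3, e4]
    ring
  have hBT : Mᵀ.BlockTriangular (wt a) := by
    intro p q hlt
    show M q p = 0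
    refine hvan q p (fun he => ?_) (not_lt.2 hlt.le)
    rw [he] at hlt
    exact lt_irrefl _ hlt
  have hblocks : ∀ k : ℕ, (Mᵀ.toSquareBlock (wt a) k) = 1 := by
    intro k
    ext p q
    show M q.1 p.1 = (1 : Matrix _ _ ℝ) p q
    by_cases hpq : p = q
    · subst hpq
      rw [hdiag, Matrix.one_apply_eq]
    · rw [Matrix.one_apply_ne hpq]
      refine hvan q.1 p.1 (fun he => hpq (Subtype.ext he.symm)) ?_
      rw [p.2, q.2]
      exact lt_irrefl _
  have hdet1 : M.det = 1 := by
    rw [← Matrix.det_transpose, hBT.det]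
    refine Finset.prod_eq_one fun k _ => ?_
    rw [hblocks, Matrix.det_one]
  rw [← LinearMap.det_toMatrix (Pi.basisFun ℝ (SymIdx m)), ← hMdef, hdet1]

lemma det_Tg (g : Matrix (Fin m) (Fin m) ℝ) (hg : IsUnit g.det) :
    LinearMap.det (Tg g) = g.det ^ (m + 1) := by
  induction g using Matrix.diagonal_transvection_induction with
  | hdiag D _ => exact det_Tg_diagonal D
  | htransvec t => rw [det_Tg_transvection t, Matrix.TransvectionStruct.det, one_pow]
  | hmul A B hA hB =>
      rw [Matrix.det_mul] at hg
      rw [Tg_mul, LinearMap.det_comp, hA (isUnit_of_mul_isUnit_left hg),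
        hB (isUnit_of_mul_isUnit_right hg), Matrix.det_mul, mul_pow]

end SymAux

/-- Under the change of variables `s ↦ g s gᵀ`, `g ∈ GL(m,ℝ)`, the Lebesgue measure
on the space `S_m` of `m × m` real symmetric matrices transforms by the factor
`|det g|^{m+1}`: for integrable `f` on `S_m`,
`∫_{S_m} f(g s gᵀ) ds = |det g|^{-(m+1)} ∫_{S_m} f(s) ds`. -/
theorem symmetric_lebesgue_change_of_variables (m : ℕ) (hm : 1 ≤ m)
    (g : Matrix (Fin m) (Fin m) ℝ) (hg : IsUnit g.det)
    (f : Matrix (Fin m) (Fin m) ℝ → ℝ)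
    (hf : Integrable (fun x : SymIdx m → ℝ => f (symMat x))) :
    ∫ x : SymIdx m → ℝ, f (g * symMat x * gᵀ)
    = |g.det| ^ (-((m : ℝ) + 1)) * ∫ x : SymIdx m → ℝ, f (symMat x) := by
  open SymAux in
  have hdet0 : g.det ≠ 0 := hg.ne_zero
  have hdetT : LinearMap.det (Tg g) = g.det ^ (m + 1) := det_Tg g hg
  have hdetT0 : LinearMap.det (Tg g) ≠ 0 := by rw [hdetT]; exact pow_ne_zero _ hdet0
  have hmap : Measure.map (Tg g) volume
      = ENNReal.ofReal |(LinearMap.det (Tg g))⁻¹| • (volume : Measure (SymIdx m → ℝ)) :=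
    Measure.map_linearMap_addHaar_eq_smul_addHaar _ hdetT0
  have hmeas : AEMeasurable (Tg g) (volume : Measure (SymIdx m → ℝ)) :=
    ((Tg g).continuous_of_finiteDimensional).measurable.aemeasurable
  have hsm : AEStronglyMeasurable (fun x : SymIdx m → ℝ => f (symMat x))
      (Measure.map (Tg g) volume) := by
    rw [hmap]; exact hf.aestronglyMeasurable.smul_measure _
  have key : ∫ x : SymIdx m → ℝ, f (symMat (Tg g x))
      = |(LinearMap.det (Tg g))⁻¹| * ∫ x : SymIdx m → ℝ, f (symMat x) := by
    rw [← integral_map hmeas hsm, hmap, integral_smul_measure, ENNReal.toReal_ofReal (abs_nonneg _),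
      smul_eq_mul]
  have heq : ∀ x : SymIdx m → ℝ, f (symMat (Tg g x)) = f (g * symMat x * gᵀ) := by
    intro x; rw [symMat_Tg]
  simp only [heq] at key
  rw [key, hdetT]
  congr 1
  rw [abs_inv, abs_pow, Real.rpow_neg (abs_nonneg _)]
  rw [show ((m : ℝ) + 1) = ((m + 1 : ℕ) : ℝ) by push_cast; ring, Real.rpow_natCast]
end

section
/- If p₁, p₂ ∈ P_m and s = p₁ + p₂, r = s^{-1/2} p₁ s^{-1/2}, then s ∈ P_m, r ∈ P_m, I_m - r ∈ P_m, and p₁ = s^{1/2} r s^{1/2}, p₂ = s^{1/2}(I_m - r)s^{1/2}; conversely, for any s ∈ P_m and r with 0 < r < I_m, the matrices p₁ = s^{1/2} r s^{1/2} and p₂ = s^{1/2}(I_m - r)s^{1/2} are both positive definite and sum to s. Thus (p₁,p₂) ↦ (s,r) is a bijection from P_m × P_m to P_m × (0,I_m). -/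
open Matrix

/- The positive semi-definite square root of a positive semi-definite matrix
(junk value `0` otherwise). -/
open Classical in
noncomputable def psqrt {m : ℕ} (r : Matrix (Fin m) (Fin m) ℝ) : Matrix (Fin m) (Fin m) ℝ :=
  if h : r.PosSemidef then
    h.1.eigenvectorUnitary.1 * diagonal ((↑) ∘ (√·) ∘ h.1.eigenvalues) *
      (star h.1.eigenvectorUnitary : Matrix (Fin m) (Fin m) ℝ) else 0

lemma psqrt_sq {m : ℕ} {s : Matrix (Fin m) (Fin m) ℝ} (hs : s.PosDef) :
    psqrt s * psqrt s = s := by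
  rw [psqrt, dif_pos hs.posSemidef]
  have hU : (star hs.posSemidef.1.eigenvectorUnitary : Matrix (Fin m) (Fin m) ℝ) *
      hs.posSemidef.1.eigenvectorUnitary.1 = 1 := Unitary.coe_star_mul_self _
  have hD : diagonal (((↑) : ℝ → ℝ) ∘ (√·) ∘ hs.posSemidef.1.eigenvalues) *
      diagonal ((↑) ∘ (√·) ∘ hs.posSemidef.1.eigenvalues) =
      diagonal (RCLike.ofReal ∘ hs.posSemidef.1.eigenvalues) := by
    rw [diagonal_mul_diagonal]
    congr 1; funext i
    simp [Real.mul_self_sqrt (hs.posSemidef.eigenvalues_nonneg i)]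
  conv_rhs => rw [hs.posSemidef.1.spectral_theorem, Unitary.conjStarAlgAut_apply]
  rw [← hD]
  simp only [mul_assoc]
  rw [← mul_assoc (star _ : Matrix (Fin m) (Fin m) ℝ) _ _, hU, one_mul]

lemma psqrt_herm {m : ℕ} {s : Matrix (Fin m) (Fin m) ℝ} (hs : s.PosDef) :
    (psqrt s).IsHermitian := by
  rw [psqrt, dif_pos hs.posSemidef]
  exact isHermitian_mul_mul_conjTranspose _ (isHermitian_diagonal_of_self_adjoint _
    (by ext i; simp))

lemma psqrt_isUnit {m : ℕ} {s : Matrix (Fin m) (Fin m) ℝ} (hs : s.PosDef) :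
    IsUnit (psqrt s) := by
  have hdet : det (psqrt s) * det (psqrt s) = det s := by rw [← det_mul, psqrt_sq hs]
  have hd : det (psqrt s) ≠ 0 := by
    intro h
    rw [h, mul_zero] at hdet
    exact hs.det_pos.ne' hdet.symm
  exact (isUnit_iff_isUnit_det _).2 hd.isUnit

lemma psqrt_inv_mul {m : ℕ} {s : Matrix (Fin m) (Fin m) ℝ} (hs : s.PosDef) :
    (psqrt s)⁻¹ * psqrt s = 1 :=
  nonsing_inv_mul _ ((isUnit_iff_isUnit_det _).1 (psqrt_isUnit hs))

lemma psqrt_mul_inv {m : ℕ} {s : Matrix (Fin m) (Fin m) ℝ} (hs : s.PosDef) :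
    psqrt s * (psqrt s)⁻¹ = 1 :=
  mul_nonsing_inv _ ((isUnit_iff_isUnit_det _).1 (psqrt_isUnit hs))

lemma posDef_conj {n : Type*} [Fintype n] [DecidableEq n] {A B : Matrix n n ℝ}
    (hA : A.PosDef) (hB : IsUnit B) (hBH : B.IsHermitian) : (B * A * B).PosDef := by
  have h : (Bᴴ * A * B).PosDef := by
    exact hA.conjTranspose_mul_mul_same (mulVec_injective_iff_isUnit.mpr hB)
  rwa [hBH.eq] at h

lemma psqrt_forward {m : ℕ} {p₁ p₂ : Matrix (Fin m) (Fin m) ℝ}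
    (h1 : p₁.PosDef) (h2 : p₂.PosDef) :
    (p₁ + p₂).PosDef ∧
    ((psqrt (p₁ + p₂))⁻¹ * p₁ * (psqrt (p₁ + p₂))⁻¹).PosDef ∧
    (1 - (psqrt (p₁ + p₂))⁻¹ * p₁ * (psqrt (p₁ + p₂))⁻¹).PosDef ∧
    p₁ = psqrt (p₁ + p₂) * ((psqrt (p₁ + p₂))⁻¹ * p₁ * (psqrt (p₁ + p₂))⁻¹) *
          psqrt (p₁ + p₂) ∧
    p₂ = psqrt (p₁ + p₂) *
          (1 - (psqrt (p₁ + p₂))⁻¹ * p₁ * (psqrt (p₁ + p₂))⁻¹) * psqrt (p₁ + p₂) := by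
  have hs : (p₁ + p₂).PosDef := h1.add h2
  set q := psqrt (p₁ + p₂) with hqdef
  have hq : q * q = p₁ + p₂ := psqrt_sq hs
  have hqi : q * q⁻¹ = 1 := psqrt_mul_inv hs
  have hiq : q⁻¹ * q = 1 := psqrt_inv_mul hs
  have hiU : IsUnit q⁻¹ := ⟨⟨q⁻¹, q, hiq, hqi⟩, rfl⟩
  have hiH : (q⁻¹).IsHermitian := (psqrt_herm hs).inv
  have hr : (q⁻¹ * p₁ * q⁻¹).PosDef := posDef_conj h1 hiU hiH
  have hsub : 1 - q⁻¹ * p₁ * q⁻¹ = q⁻¹ * p₂ * q⁻¹ := by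
    have hone : q⁻¹ * (p₁ + p₂) * q⁻¹ = 1 := by
      rw [← hq, ← mul_assoc, hiq, one_mul, hqi]
    rw [← hone, mul_add, add_mul, add_sub_cancel_left]
  have hp1 : q * (q⁻¹ * p₁ * q⁻¹) * q = p₁ := by
    simp only [← mul_assoc]
    rw [hqi, one_mul, mul_assoc, hiq, mul_one]
  have hp2 : q * (q⁻¹ * p₂ * q⁻¹) * q = p₂ := by
    simp only [← mul_assoc]
    rw [hqi, one_mul, mul_assoc, hiq, mul_one]
  exact ⟨hs, hr, hsub ▸ posDef_conj h2 hiU hiH, hp1.symm, by rw [hsub, hp2]⟩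

lemma psqrt_backward {m : ℕ} {s r : Matrix (Fin m) (Fin m) ℝ}
    (hs : s.PosDef) (hr : r.PosDef) (hr' : (1 - r).PosDef) :
    (psqrt s * r * psqrt s).PosDef ∧
    (psqrt s * (1 - r) * psqrt s).PosDef ∧
    psqrt s * r * psqrt s + psqrt s * (1 - r) * psqrt s = s := by
  refine ⟨posDef_conj hr (psqrt_isUnit hs) (psqrt_herm hs),
    posDef_conj hr' (psqrt_isUnit hs) (psqrt_herm hs), ?_⟩
  have h1 : r + (1 - r) = 1 := by abel
  rw [mul_assoc, mul_assoc, ← mul_add, ← add_mul, h1, one_mul, psqrt_sq hs]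

/-- If `p₁, p₂ ∈ P_m` and `s = p₁ + p₂`, `r = s^{-1/2} p₁ s^{-1/2}`, then `s ∈ P_m`,
`r ∈ P_m`, `I_m - r ∈ P_m`, and `p₁ = s^{1/2} r s^{1/2}`,
`p₂ = s^{1/2}(I_m - r)s^{1/2}`; conversely for `s ∈ P_m` and `0 < r < I_m`, the
matrices `p₁ = s^{1/2} r s^{1/2}` and `p₂ = s^{1/2}(I_m - r)s^{1/2}` are positive
definite and sum to `s`.  Thus `(p₁,p₂) ↦ (s,r)` is a bijection from `P_m × P_m`
onto `P_m × (0, I_m)`. -/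
theorem posdef_sum_beta_bijection (m : ℕ) (hm : 1 ≤ m) :
    (∀ p₁ p₂ : Matrix (Fin m) (Fin m) ℝ, p₁.PosDef → p₂.PosDef →
      (p₁ + p₂).PosDef ∧
      ((psqrt (p₁ + p₂))⁻¹ * p₁ * (psqrt (p₁ + p₂))⁻¹).PosDef ∧
      (1 - (psqrt (p₁ + p₂))⁻¹ * p₁ * (psqrt (p₁ + p₂))⁻¹).PosDef ∧
      p₁ = psqrt (p₁ + p₂) * ((psqrt (p₁ + p₂))⁻¹ * p₁ * (psqrt (p₁ + p₂))⁻¹) *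
            psqrt (p₁ + p₂) ∧
      p₂ = psqrt (p₁ + p₂) *
            (1 - (psqrt (p₁ + p₂))⁻¹ * p₁ * (psqrt (p₁ + p₂))⁻¹) * psqrt (p₁ + p₂)) ∧
    (∀ s r : Matrix (Fin m) (Fin m) ℝ, s.PosDef → r.PosDef → (1 - r).PosDef →
      (psqrt s * r * psqrt s).PosDef ∧
      (psqrt s * (1 - r) * psqrt s).PosDef ∧
      psqrt s * r * psqrt s + psqrt s * (1 - r) * psqrt s = s) ∧
    Set.BijOn
      (fun pq : Matrix (Fin m) (Fin m) ℝ × Matrix (Fin m) (Fin m) ℝ =>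
        (pq.1 + pq.2, (psqrt (pq.1 + pq.2))⁻¹ * pq.1 * (psqrt (pq.1 + pq.2))⁻¹))
      ({p | p.PosDef} ×ˢ {p | p.PosDef})
      ({p | p.PosDef} ×ˢ {r | r.PosDef ∧ (1 - r).PosDef}) := by
  refine ⟨fun p₁ p₂ h1 h2 => psqrt_forward h1 h2,
    fun s r hs hr hr' => psqrt_backward hs hr hr', ?_, ?_, ?_⟩
  · rintro ⟨p₁, p₂⟩ ⟨h1, h2⟩
    obtain ⟨hs, hr, hr', -, -⟩ := psqrt_forward h1 h2
    exact ⟨hs, hr, hr'⟩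
  · rintro ⟨p₁, p₂⟩ ⟨h1, h2⟩ ⟨p₁', p₂'⟩ ⟨h1', h2'⟩ heq
    simp only [Prod.mk.injEq] at heq
    obtain ⟨hseq, hreq⟩ := heq
    obtain ⟨-, -, -, hp1, -⟩ := psqrt_forward h1 h2
    obtain ⟨-, -, -, hp1', -⟩ := psqrt_forward h1' h2'
    dsimp only at hp1 hp1'
    rw [← hseq] at hreq
    have hp1eq : p₁ = p₁' := by
      rw [hp1, hp1', ← hseq, hreq]
    have hp2eq : p₂ = p₂' := by
      have := hseq
      rw [hp1eq] at this
      exact add_left_cancel this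
    exact Prod.ext hp1eq hp2eq
  · rintro ⟨s, r⟩ ⟨hs, hr, hr'⟩
    obtain ⟨hq1, hq2, hsum⟩ := psqrt_backward hs hr hr'
    refine ⟨(psqrt s * r * psqrt s, psqrt s * (1 - r) * psqrt s), ⟨hq1, hq2⟩, ?_⟩
    simp only [Prod.mk.injEq]
    constructor
    · exact hsum
    · rw [hsum]
      simp only [← mul_assoc]
      rw [psqrt_inv_mul hs, one_mul, mul_assoc, psqrt_mul_inv hs, mul_one]
end
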